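/- Let X be a δ-hyperbolic geodesic metric space and let x, y be a locally diametrical pair in a finite set S ⊆ X. Let c be the midpoint of a geodesic [x,y] and λ = d(x,y)/2. Then every point z ∈ S satisfies d(z,c) ≤ λ + δ. -/

import Mathlib

/-- A geodesic from `x` to `y`, parametrized by arc length on `[0, dist x y]`. -/
def IsGeodesicFrom {X : Type*} [MetricSpace X] (γ : ℝ → X) (x y : X) : Prop :=
  γ 0 = x ∧ γ (dist x y) = y ∧
    ∀ s ∈ Set.Icc (0 : ℝ) (dist x y), ∀ t ∈ Set.Icc (0 : ℝ) (dist x y),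
      dist (γ s) (γ t) = |s - t|

/-- A geodesic metric space: every pair of points is joined by a geodesic. -/
def GeodesicMS (X : Type*) [MetricSpace X] : Prop :=
  ∀ x y : X, ∃ γ : ℝ → X, IsGeodesicFrom γ x y

/-- Thin-triangle (insize) δ-hyperbolicity: in every geodesic triangle, points at equal
parameter (up to the internal distance) on the two sides from a common vertex are within δ. -/
def ThinTriangles (X : Type*) [MetricSpace X] (δ : ℝ) : Prop :=
  ∀ (x y z : X) (f g h : ℝ → X),
    IsGeodesicFrom f x y → IsGeodesicFrom g x z → IsGeodesicFrom h y z →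
    (∀ t ∈ Set.Icc (0 : ℝ) ((dist x y + dist x z - dist y z) / 2),
        dist (f t) (g t) ≤ δ) ∧
    (∀ t ∈ Set.Icc (0 : ℝ) ((dist x y + dist y z - dist x z) / 2),
        dist (f (dist x y - t)) (h t) ≤ δ) ∧
    (∀ t ∈ Set.Icc (0 : ℝ) ((dist x z + dist y z - dist x y) / 2),
        dist (g (dist x z - t)) (h (dist y z - t)) ≤ δ)

/-- If `x, y` is a locally diametrical pair of a finite set `S` in a δ-hyperbolic
geodesic space and `c` is the midpoint of a geodesic `[x,y]`, then every `z ∈ S`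
satisfies `dist z c ≤ dist x y / 2 + δ`. -/
theorem midpoint_dominates {X : Type*} [MetricSpace X] {δ : ℝ}
    (hgeo : GeodesicMS X) (hthin : ThinTriangles X δ)
    (S : Finset X) (x y : X) (hx : x ∈ S) (hy : y ∈ S)
    (hlocx : ∀ z ∈ S, dist x z ≤ dist x y)
    (hlocy : ∀ z ∈ S, dist y z ≤ dist y x)
    (γ : ℝ → X) (hγ : IsGeodesicFrom γ x y) :
    ∀ z ∈ S, dist z (γ (dist x y / 2)) ≤ dist x y / 2 + δ := by
  intro z hz
  obtain ⟨g, hg⟩ := hgeo x z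
  obtain ⟨h, hh⟩ := hgeo y z
  obtain ⟨h1, h2, -⟩ := hthin x y z γ g h hγ hg hh
  have hd0 : (0:ℝ) ≤ dist x y := dist_nonneg
  have hxz : dist x z ≤ dist x y := hlocx z hz
  have hyz : dist y z ≤ dist x y := by
    have := hlocy z hz; rwa [dist_comm y x] at this
  have htri1 : dist x y ≤ dist x z + dist y z := by
    have := dist_triangle x z y; rwa [dist_comm z y] at this
  set m := dist x y / 2 with hm
  have hm0 : (0:ℝ) ≤ m := by positivity
  rcases le_or_gt m ((dist x y + dist x z - dist y z) / 2) with hcase | hcase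
  · have hδ := h1 m ⟨hm0, hcase⟩
    have hmxz : m ≤ dist x z := by linarith
    have hgz : dist (g m) z = dist x z - m := by
      have := hg.2.2 m ⟨hm0, hmxz⟩ (dist x z) ⟨dist_nonneg, le_refl _⟩
      rw [hg.2.1] at this
      rw [this, abs_of_nonpos (by linarith)]; ring
    calc dist z (γ m) ≤ dist z (g m) + dist (g m) (γ m) := dist_triangle _ _ _
      _ ≤ (dist x z - m) + δ := by
          rw [dist_comm z (g m), hgz, dist_comm (g m) (γ m)]
          exact add_le_add_right hδ _
      _ ≤ m + δ := by linarith
  · have hmb : m ≤ (dist x y + dist y z - dist x z) / 2 := by linarith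
    have hδ := h2 m ⟨hm0, hmb⟩
    have hmeq : dist x y - m = m := by rw [hm]; ring
    rw [hmeq] at hδ
    have hmyz : m ≤ dist y z := by linarith
    have hhz : dist (h m) z = dist y z - m := by
      have := hh.2.2 m ⟨hm0, hmyz⟩ (dist y z) ⟨dist_nonneg, le_refl _⟩
      rw [hh.2.1] at this
      rw [this, abs_of_nonpos (by linarith)]; ring
    calc dist z (γ m) ≤ dist z (h m) + dist (h m) (γ m) := dist_triangle _ _ _
      _ ≤ (dist y z - m) + δ := by
          rw [dist_comm z (h m), hhz, dist_comm (h m) (γ m)]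
          exact add_le_add_right hδ _
      _ ≤ m + δ := by linarith
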